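/- Let A be a finite-dimensional self-injective algebra over a field K such that every indecomposable projective right A-module is uniserial (i.e., A is a selfinjective Nakayama algebra), and suppose every indecomposable projective A-module P does not lie on a short cycle in mod A. Then every indecomposable projective A-module is composition free, i.e., each simple module occurs at most once as a composition factor of P. -/

import Mathlib

/-- A module is indecomposable if it is nonzero and is not the internal direct sum of two
nonzero submodules. -/
def IsIndecomposable (R : Type*) [Ring R] (M : Type*) [AddCommGroup M] [Module R M] :
    Prop :=
  Nontrivial M ∧ ∀ p q : Submodule R M, IsCompl p q → p = ⊥ ∨ q = ⊥

/-- A module is uniserial if its submodules form a chain. -/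
def IsUniserialModule (R : Type*) [Ring R] (M : Type*) [AddCommGroup M] [Module R M] :
    Prop :=
  ∀ p q : Submodule R M, p ≤ q ∨ q ≤ p

/-- The `i`-th composition factor of a composition series of submodules. -/
abbrev csFactor {R M : Type*} [Ring R] [AddCommGroup M] [Module R M]
    (s : CompositionSeries (Submodule R M)) (i : Fin s.length) :=
  ↥(s i.succ) ⧸ Submodule.comap (s i.succ).subtype (s i.castSucc)

/-- A module is composition free if all its simple composition factors occur with
multiplicity one, i.e. the factors of any composition series are pairwise
non-isomorphic. -/
def IsCompositionFree (R : Type*) [Ring R] (M : Type*) [AddCommGroup M] [Module R M] :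
    Prop :=
  ∀ s : CompositionSeries (Submodule R M), s 0 = ⊥ → s (Fin.last _) = ⊤ →
    ∀ i j : Fin s.length, i ≠ j → IsEmpty (csFactor s i ≃ₗ[R] csFactor s j)

/-- `M` lies on a short cycle `M → Y → M` of nonzero non-isomorphisms between
indecomposable finite-dimensional modules. -/
def LiesOnShortCycle (R : Type*) [Ring R] (M : Type v) [AddCommGroup M] [Module R M] :
    Prop :=
  ∃ Y : ModuleCat.{v} R, Module.Finite R Y ∧ IsIndecomposable R Y ∧
    ∃ (f : M →ₗ[R] Y) (g : Y →ₗ[R] M), f ≠ 0 ∧ g ≠ 0 ∧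
      ¬Function.Bijective f ∧ ¬Function.Bijective g

section Aux


variable {R : Type*} [Ring R]

lemma uniserial_submodule {M : Type*} [AddCommGroup M] [Module R M]
    (h : IsUniserialModule R M) (W : Submodule R M) : IsUniserialModule R W := by
  intro p q
  rcases h (p.map W.subtype) (q.map W.subtype) with h' | h'
  · exact Or.inl ((Submodule.map_le_map_iff_of_injective W.injective_subtype p q).mp h')
  · exact Or.inr ((Submodule.map_le_map_iff_of_injective W.injective_subtype q p).mp h')

lemma baer_pi {ι : Type*} {M : ι → Type*} [∀ i, AddCommGroup (M i)] [∀ i, Module R (M i)]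
    (h : ∀ i, Module.Baer R (M i)) : Module.Baer R (∀ i, M i) := by
  intro I g
  choose g' hg' using fun i => h i I ((LinearMap.proj i) ∘ₗ g)
  exact ⟨LinearMap.pi g', fun x hx => funext fun i => hg' i x hx⟩

lemma baer_retract {M P : Type*} [AddCommGroup M] [Module R M] [AddCommGroup P] [Module R P]
    (hM : Module.Baer R M) (i : P →ₗ[R] M) (pr : M →ₗ[R] P)
    (hpi : pr ∘ₗ i = LinearMap.id) : Module.Baer R P := by
  intro I g
  obtain ⟨g', hg'⟩ := hM I (i ∘ₗ g)
  refine ⟨pr ∘ₗ g', fun x hx => ?_⟩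
  have h2 := congrArg pr (hg' x hx)
  have h3 := DFunLike.congr_fun hpi (g ⟨x, hx⟩)
  simpa using h2.trans h3

lemma isCompl_piece {F : Type*} [AddCommGroup F] [Module R F] {N qN X Y : Submodule R F}
    (hN : IsCompl N qN) (hXN : X ≤ N) (hYN : Y ≤ N) (hsup : X ⊔ Y = N) (hinf : X ⊓ Y = ⊥) :
    IsCompl X (Y ⊔ qN) := by
  constructor
  · rw [disjoint_iff]
    have h1 : (Y ⊔ qN) ⊓ N = Y := by
      rw [sup_inf_assoc_of_le qN hYN, hN.symm.inf_eq_bot, sup_bot_eq]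
    calc X ⊓ (Y ⊔ qN) = (X ⊓ N) ⊓ (Y ⊔ qN) := by rw [inf_eq_left.mpr hXN]
      _ = X ⊓ ((Y ⊔ qN) ⊓ N) := by rw [inf_assoc, inf_comm N]
      _ = ⊥ := by rw [h1, hinf]
  · rw [codisjoint_iff, ← sup_assoc, hsup, hN.sup_eq_top]

lemma exists_indec_summand {F V : Type*} [AddCommGroup F] [Module R F] [AddCommGroup V]
    [Module R V] [IsArtinian R F] (hV : IsUniserialModule R V) (hVnt : Nontrivial V) :
    ∀ N : Submodule R F, (∃ q, IsCompl N q) → ∀ g : N →ₗ[R] V, Function.Surjective g →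
      ∃ (N' q' : Submodule R F) (g' : N' →ₗ[R] V),
        IsCompl N' q' ∧ Function.Surjective g' ∧ IsIndecomposable R N' := by
  intro N
  induction N using WellFoundedLT.induction with
  | _ N ih =>
  rintro ⟨qN, hqN⟩ g hg
  by_cases hind : IsIndecomposable R N
  · exact ⟨N, qN, g, hqN, hg, hind⟩
  have hnt : Nontrivial ↥N := by
    obtain ⟨v, w, hvw⟩ := hVnt
    obtain ⟨x, rfl⟩ := hg v
    obtain ⟨y, rfl⟩ := hg w
    exact ⟨x, y, fun hxy => hvw (by rw [hxy])⟩
  rw [IsIndecomposable, not_and] at hind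
  push_neg at hind
  obtain ⟨p, q, hpq, hp, hq⟩ := hind hnt
  have hP1N : Submodule.map N.subtype p ≤ N := Submodule.map_subtype_le N p
  have hQ1N : Submodule.map N.subtype q ≤ N := Submodule.map_subtype_le N q
  set P1 := Submodule.map N.subtype p with hP1def
  set Q1 := Submodule.map N.subtype q with hQ1def
  have hsup : P1 ⊔ Q1 = N := by
    rw [hP1def, hQ1def, ← Submodule.map_sup, hpq.sup_eq_top, Submodule.map_top,
      Submodule.range_subtype]
  have hinf : P1 ⊓ Q1 = ⊥ := by
    rw [hP1def, hQ1def, ← Submodule.map_inf N.subtype N.injective_subtype, hpq.inf_eq_bot,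
      Submodule.map_bot]
  have hlt : ∀ (a b : Submodule R ↥N), IsCompl a b → b ≠ ⊥ →
      Submodule.map N.subtype a < N := by
    intro a b hab hbne
    rcases (Submodule.map_subtype_le N a).lt_or_eq with h | h
    · exact h
    · exfalso
      apply hbne
      have ha : a = ⊤ := by
        apply Submodule.map_injective_of_injective N.injective_subtype
        rw [h, Submodule.map_top, Submodule.range_subtype]
      exact le_bot_iff.mp (hab.disjoint.symm le_rfl (ha ▸ le_top))
  have hP1lt : P1 < N := hlt p q hpq hq
  have hQ1lt : Q1 < N := hlt q p hpq.symm hp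
  let g1 : P1 →ₗ[R] V := g ∘ₗ Submodule.inclusion hP1N
  let g2 : Q1 →ₗ[R] V := g ∘ₗ Submodule.inclusion hQ1N
  have hran : LinearMap.range g1 ⊔ LinearMap.range g2 = ⊤ := by
    rw [eq_top_iff]
    rintro v -
    obtain ⟨x, rfl⟩ := hg v
    have hx : (x : ↥N) ∈ p ⊔ q := by rw [hpq.sup_eq_top]; trivial
    obtain ⟨a, ha, b, hb, hab⟩ := Submodule.mem_sup.mp hx
    have hxab : g x = g a + g b := by rw [← map_add, hab]
    rw [hxab]
    refine Submodule.add_mem_sup ⟨⟨(a : F), Submodule.mem_map_of_mem ha⟩, ?_⟩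
      ⟨⟨(b : F), Submodule.mem_map_of_mem hb⟩, ?_⟩
    · exact congrArg g (Subtype.ext rfl)
    · exact congrArg g (Subtype.ext rfl)
  rcases hV (LinearMap.range g1) (LinearMap.range g2) with hle | hle
  · have hg2 : Function.Surjective g2 := by
      rw [← LinearMap.range_eq_top, ← sup_eq_right.mpr hle, hran]
    exact ih Q1 hQ1lt ⟨P1 ⊔ qN, isCompl_piece hqN hQ1N hP1N (by rw [sup_comm, hsup])
      (by rw [inf_comm, hinf])⟩ g2 hg2
  · have hg1 : Function.Surjective g1 := by
      rw [← LinearMap.range_eq_top, ← sup_eq_left.mpr hle, hran]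
    exact ih P1 hP1lt ⟨Q1 ⊔ qN, isCompl_piece hqN hP1N hQ1N hsup hinf⟩ g1 hg1

end Aux

/-- Let `A` be a finite-dimensional selfinjective Nakayama algebra over a
field `K` (every indecomposable projective right `A`-module is uniserial), and suppose no
indecomposable projective `A`-module lies on a short cycle in `mod A`.  Then every
indecomposable projective `A`-module is composition free. -/
theorem nakayama_projectives_composition_free_of_no_short_cycle
    {K A : Type*} [Field K] [Ring A] [Algebra K A] [FiniteDimensional K A]
    [Module.Injective Aᵐᵒᵖ A]
    (hNak : ∀ (P : Type v) [AddCommGroup P] [Module Aᵐᵒᵖ P],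
      Module.Finite Aᵐᵒᵖ P → Module.Projective Aᵐᵒᵖ P → IsIndecomposable Aᵐᵒᵖ P →
        IsUniserialModule Aᵐᵒᵖ P)
    (hnsc : ∀ (P : Type v) [AddCommGroup P] [Module Aᵐᵒᵖ P],
      Module.Finite Aᵐᵒᵖ P → Module.Projective Aᵐᵒᵖ P → IsIndecomposable Aᵐᵒᵖ P →
        ¬LiesOnShortCycle Aᵐᵒᵖ P) :
    ∀ (P : Type v) [AddCommGroup P] [Module Aᵐᵒᵖ P],
      Module.Finite Aᵐᵒᵖ P → Module.Projective Aᵐᵒᵖ P → IsIndecomposable Aᵐᵒᵖ P →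
        IsCompositionFree Aᵐᵒᵖ P := by
  intro P _ _ hfin hproj hindec
  have hPnt : Nontrivial P := hindec.1
  -- smallness of K, A, Aᵐᵒᵖ relative to universe v
  obtain ⟨x₀, hx₀⟩ := exists_ne (0 : P)
  have hKinj : Function.Injective (fun k : K => (algebraMap K Aᵐᵒᵖ k) • x₀) := by
    intro k₁ k₂ hk
    by_contra hne
    apply hx₀
    simp only at hk
    have hsub : (algebraMap K Aᵐᵒᵖ (k₁ - k₂)) • x₀ = 0 := by
      rw [map_sub, sub_smul, hk, sub_self]
    have h2 := congrArg (fun y => (algebraMap K Aᵐᵒᵖ (k₁ - k₂)⁻¹) • y) hsub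
    simp only [smul_zero, smul_smul, ← map_mul,
      inv_mul_cancel₀ (sub_ne_zero.mpr hne), map_one, one_smul] at h2
    exact h2
  haveI : Small.{v} K := small_of_injective hKinj
  haveI : Small.{v} A := small_of_injective (Module.finBasis K A).equivFun.injective
  haveI : Small.{v} Aᵐᵒᵖ := small_of_injective MulOpposite.unop_injective
  -- noetherian / artinian
  haveI : Module.Finite K Aᵐᵒᵖ :=
    Module.Finite.equiv (MulOpposite.opLinearEquiv K : A ≃ₗ[K] Aᵐᵒᵖ)
  haveI hNR : IsNoetherianRing Aᵐᵒᵖ := isNoetherian_of_tower K inferInstance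
  haveI hAR : IsArtinianRing Aᵐᵒᵖ := isArtinian_of_tower K inferInstance
  haveI : IsNoetherian Aᵐᵒᵖ P := inferInstance
  -- Baer property of P
  have hBaerA : Module.Baer Aᵐᵒᵖ A := Module.Baer.of_injective ‹Module.Injective Aᵐᵒᵖ A›
  have hBaerAop : Module.Baer Aᵐᵒᵖ Aᵐᵒᵖ := by
    refine baer_retract hBaerA
      { toFun := MulOpposite.unop, map_add' := fun a b => rfl, map_smul' := fun r x => rfl }
      { toFun := MulOpposite.op, map_add' := fun a b => rfl, map_smul' := fun r x => rfl }
      (by ext; rfl)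
  obtain ⟨n, fsur, hfsur⟩ := Module.Finite.exists_fin' Aᵐᵒᵖ P
  obtain ⟨sec, hsec⟩ := Module.projective_lifting_property fsur LinearMap.id hfsur
  have hBaerP : Module.Baer Aᵐᵒᵖ P :=
    baer_retract (baer_pi (fun _ => hBaerAop)) sec fsur hsec
  -- uniseriality of P
  have hPuni : IsUniserialModule Aᵐᵒᵖ P := hNak P hfin hproj hindec
  intro s hs0 hslast i j hij
  by_contra hcon
  rw [not_isEmpty_iff] at hcon
  obtain ⟨e0⟩ := hcon
  have hstep : ∀ k : Fin s.length, s k.castSucc ⋖ s k.succ := fun k => s.step k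
  -- the final contradiction builder
  have final : ∀ (a b : Fin (s.length + 1)), a ≠ b → s b ≠ ⊥ →
      ∀ ρ : ↥(s a) →ₗ[Aᵐᵒᵖ] ↥(s b), Function.Surjective ρ → False := by
    intro a b hab hbbot ρ hρ
    obtain ⟨h, hh⟩ := hBaerP.extension_property (s a).subtype (s a).injective_subtype
      ((s b).subtype ∘ₗ ρ)
    have happ : ∀ w : ↥(s a), h (w : P) = ((ρ w : ↥(s b)) : P) := by
      intro w
      have := DFunLike.congr_fun hh w
      simpa using this
    have hmapab : Submodule.map h (s a) = s b := by
      apply le_antisymm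
      · rintro _ ⟨x, hx, rfl⟩
        rw [show x = ((⟨x, hx⟩ : ↥(s a)) : P) from rfl, happ]
        exact (ρ ⟨x, hx⟩).2
      · intro y hy
        obtain ⟨w, hw⟩ := hρ ⟨y, hy⟩
        exact ⟨(w : P), w.2, by rw [happ, hw]⟩
    have hne0 : h ≠ 0 := by
      obtain ⟨y, hy, hyne⟩ := (Submodule.ne_bot_iff _).mp hbbot
      obtain ⟨w, hw⟩ := hρ ⟨y, hy⟩
      intro h0
      apply hyne
      have h5 := happ w
      rw [h0] at h5
      simp only [LinearMap.zero_apply] at h5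
      rw [hw] at h5
      exact h5.symm
    have hnb : ¬ Function.Bijective h := by
      intro hbij
      have hfix : ∀ k : Fin (s.length + 1), Submodule.map h (s k) = s k := by
        intro k
        induction k using Fin.induction with
        | zero => rw [hs0, Submodule.map_bot]
        | succ k ih =>
          have hcov : Submodule.map h (s k.castSucc) ⋖ Submodule.map h (s k.succ) := by
            have := (apply_covBy_apply_iff
              (Submodule.orderIsoMapComapOfBijective h hbij)).mpr (hstep k)
            simpa using this
          rw [ih] at hcov
          rcases hPuni (Submodule.map h (s k.succ)) (s k.succ) with h2 | h2
          · rcases h2.lt_or_eq with h3 | h3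
            · exact absurd h3 ((hstep k).2 hcov.1)
            · exact h3
          · rcases h2.lt_or_eq with h3 | h3
            · exact absurd h3 (hcov.2 (hstep k).1)
            · exact h3.symm
      exact hab (s.injective ((hfix a).symm.trans hmapab))
    exact hnsc P hfin hproj hindec
      ⟨ModuleCat.of Aᵐᵒᵖ P, hfin, hindec, h, h, hne0, hne0, hnb, hnb⟩
  -- main construction, for i < j
  have key : ∀ i' j' : Fin s.length, i' < j' →
      (csFactor s i' ≃ₗ[Aᵐᵒᵖ] csFactor s j') → False := by
    intro i j hij e
    have hVnt : Nontrivial ↥(s j.succ) := by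
      obtain ⟨x, hx2, hx1⟩ := SetLike.exists_of_lt (hstep j).1
      refine ⟨⟨x, hx2⟩, 0, fun hh => hx1 ?_⟩
      have hx0 : x = 0 := congrArg Subtype.val hh
      rw [hx0]; exact zero_mem _
    have hVuni : IsUniserialModule Aᵐᵒᵖ ↥(s j.succ) := uniserial_submodule hPuni _
    haveI : Module.Finite Aᵐᵒᵖ ↥(s j.succ) :=
      Module.Finite.iff_fg.mpr (IsNoetherian.noetherian _)
    obtain ⟨n2, f2, hf2⟩ := Module.Finite.exists_fin' Aᵐᵒᵖ ↥(s j.succ)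
    let eF : Shrink.{v} (Fin n2 → Aᵐᵒᵖ) ≃ₗ[Aᵐᵒᵖ] (Fin n2 → Aᵐᵒᵖ) :=
      (Shrink.linearEquiv Aᵐᵒᵖ (Fin n2 → Aᵐᵒᵖ))
    haveI : IsArtinian Aᵐᵒᵖ (Shrink.{v} (Fin n2 → Aᵐᵒᵖ)) := isArtinian_of_linearEquiv eF.symm
    haveI : IsNoetherian Aᵐᵒᵖ (Shrink.{v} (Fin n2 → Aᵐᵒᵖ)) := isNoetherian_of_linearEquiv eF.symm
    let gtop : ↥(⊤ : Submodule Aᵐᵒᵖ (Shrink.{v} (Fin n2 → Aᵐᵒᵖ))) →ₗ[Aᵐᵒᵖ] ↥(s j.succ) :=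
      (f2 ∘ₗ eF.toLinearMap) ∘ₗ (Submodule.topEquiv).toLinearMap
    have hgtop : Function.Surjective gtop :=
      (hf2.comp eF.surjective).comp Submodule.topEquiv.surjective
    obtain ⟨N', q', gQ, hcompl, hgQ, hindQ⟩ :=
      exists_indec_summand hVuni hVnt ⊤ ⟨⊥, isCompl_top_bot⟩ gtop hgtop
    haveI : Module.Finite Aᵐᵒᵖ ↥N' := Module.Finite.iff_fg.mpr (IsNoetherian.noetherian _)
    haveI : Module.Projective Aᵐᵒᵖ (Shrink.{v} (Fin n2 → Aᵐᵒᵖ)) :=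
      Module.Projective.of_equiv eF.symm
    have hprojQ : Module.Projective Aᵐᵒᵖ ↥N' :=
      Module.Projective.of_split N'.subtype (Submodule.linearProjOfIsCompl _ _ hcompl)
        (Submodule.linearProjOfIsCompl_comp_subtype hcompl)
    have hQuni : IsUniserialModule Aᵐᵒᵖ ↥N' := hNak ↥N' ‹_› hprojQ hindQ
    have hTi_nt : Nontrivial (csFactor s i) := by
      apply fun hlt => Submodule.Quotient.nontrivial_iff.mpr (lt_top_iff_ne_top.mp hlt)
      obtain ⟨x, hx2, hx1⟩ := SetLike.exists_of_lt (hstep i).1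
      refine lt_top_iff_ne_top.mpr (fun htop => hx1 ?_)
      have hmem : (⟨x, hx2⟩ : ↥(s i.succ)) ∈
          Submodule.comap (s i.succ).subtype (s i.castSucc) := by
        rw [htop]; trivial
      exact hmem
    let g0 : ↥N' →ₗ[Aᵐᵒᵖ] (csFactor s i) :=
      (e.symm.toLinearMap ∘ₗ (Submodule.comap (s j.succ).subtype (s j.castSucc)).mkQ) ∘ₗ gQ
    have hg0 : Function.Surjective g0 :=
      (e.symm.surjective.comp (Submodule.mkQ_surjective _)).comp hgQ
    obtain ⟨l, hl⟩ := Module.projective_lifting_property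
      (Submodule.comap (s i.succ).subtype (s i.castSucc)).mkQ g0 (Submodule.mkQ_surjective _)
    have hlsurj : Function.Surjective l := by
      have h1 : ¬ Submodule.map (s i.succ).subtype (LinearMap.range l) ≤ s i.castSucc := by
        intro hle
        obtain ⟨t, ht⟩ := exists_ne (0 : csFactor s i)
        apply ht
        obtain ⟨w, rfl⟩ := hg0 t
        rw [← DFunLike.congr_fun hl w]
        simp only [LinearMap.comp_apply, Submodule.mkQ_apply, Submodule.Quotient.mk_eq_zero]
        exact hle ⟨l w, LinearMap.mem_range_self l w, rfl⟩
      rcases hPuni (Submodule.map (s i.succ).subtype (LinearMap.range l)) (s i.castSucc)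
        with h2 | h2
      · exact absurd h2 h1
      · have hlt2 : s i.castSucc < Submodule.map (s i.succ).subtype (LinearMap.range l) :=
          lt_of_le_of_ne h2 (fun hh => h1 (le_of_eq hh.symm))
        have hle2 : Submodule.map (s i.succ).subtype (LinearMap.range l) ≤ s i.succ :=
          Submodule.map_subtype_le _ _
        have heq : Submodule.map (s i.succ).subtype (LinearMap.range l) = s i.succ := by
          rcases hle2.lt_or_eq with h3 | h3
          · exact absurd h3 ((hstep i).2 hlt2)
          · exact h3
        rw [← LinearMap.range_eq_top]
        apply Submodule.map_injective_of_injective (s i.succ).injective_subtype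
        rw [heq, Submodule.map_top, Submodule.range_subtype]
    have factorThru : ∀ (a b : Fin (s.length + 1)) (π' : ↥N' →ₗ[Aᵐᵒᵖ] ↥(s a))
        (l' : ↥N' →ₗ[Aᵐᵒᵖ] ↥(s b)), Function.Surjective π' → Function.Surjective l' →
        LinearMap.ker π' ≤ LinearMap.ker l' →
        ∃ ρ : ↥(s a) →ₗ[Aᵐᵒᵖ] ↥(s b), Function.Surjective ρ := by
      intro a b π' l' hπ hl' hker
      refine ⟨(LinearMap.ker π').liftQ l' hker ∘ₗ
        (π'.quotKerEquivOfSurjective hπ).symm.toLinearMap, ?_⟩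
      have hsurj2 : Function.Surjective ((LinearMap.ker π').liftQ l' hker) := by
        rw [← LinearMap.range_eq_top, Submodule.range_liftQ, LinearMap.range_eq_top]
        exact hl'
      simp only [LinearMap.coe_comp, LinearEquiv.coe_coe]
      exact hsurj2.comp (LinearEquiv.surjective _)
    have hine : (i.succ : Fin (s.length + 1)) ≠ j.succ := by
      simpa [Fin.succ_inj] using hij.ne
    have hibot : s i.succ ≠ ⊥ := (lt_of_le_of_lt bot_le (hstep i).1).ne'
    have hjbot : s j.succ ≠ ⊥ := (lt_of_le_of_lt bot_le (hstep j).1).ne'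
    rcases hQuni (LinearMap.ker gQ) (LinearMap.ker l) with hk | hk
    · obtain ⟨ρ, hρ⟩ := factorThru j.succ i.succ gQ l hgQ hlsurj hk
      exact final j.succ i.succ hine.symm hibot ρ hρ
    · obtain ⟨ρ, hρ⟩ := factorThru i.succ j.succ l gQ hlsurj hgQ hk
      exact final i.succ j.succ hine hjbot ρ hρ
  rcases hij.lt_or_gt with hlt | hlt
  · exact key i j hlt e0
  · exact key j i hlt e0.symm
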